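/- Nonnegativity of the weighted V-statistic energy distance: given nonnegative weights w⁰₁,…,w⁰_{n₀} summing to 1 and w¹₁,…,w¹_{n₁} summing to 1, and points x⁰₁,…,x⁰_{n₀}, x¹₁,…,x¹_{n₁} ∈ ℝ, the quantity 2Σᵢⱼ w⁰ᵢw¹ⱼ|x⁰ᵢ−x¹ⱼ| − Σᵢⱼ w⁰ᵢw⁰ⱼ|x⁰ᵢ−x⁰ⱼ| − Σᵢⱼ w¹ᵢw¹ⱼ|x¹ᵢ−x¹ⱼ| is nonnegative. -/

import Mathlib

open Finset MeasureTheory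

noncomputable def eJ (a : ℝ) : ℝ → ℝ := Set.indicator (Set.Ici a) (fun _ => (1:ℝ))

noncomputable def eD (a b : ℝ) : ℝ → ℝ := fun t => (eJ a t - eJ b t)^2

lemma eD_comm (a b : ℝ) : eD a b = eD b a := by
  funext t; simp only [eD]; ring

lemma eD_eq_of_le {a b : ℝ} (h : a ≤ b) (t : ℝ) :
    eD a b t = Set.indicator (Set.Ico a b) (fun _ => (1:ℝ)) t := by
  simp only [eD, eJ, Set.indicator_apply, Set.mem_Ici, Set.mem_Ico]
  split_ifs <;> (try push_neg at *) <;> simp_all <;> linarith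

lemma eD_integral {a b : ℝ} (h : a ≤ b) : ∫ t, eD a b t = b - a := by
  have : (fun t => eD a b t) = Set.indicator (Set.Ico a b) (fun _ => (1:ℝ)) := by
    funext t; exact eD_eq_of_le h t
  rw [this, MeasureTheory.integral_indicator_const _ measurableSet_Ico]
  simp [Real.volume_Ico, ENNReal.toReal_ofReal (by linarith : (0:ℝ) ≤ b - a), h]

lemma eD_integrable (a b : ℝ) : Integrable (eD a b) := by
  rcases le_total a b with h | h
  · have : eD a b = Set.indicator (Set.Ico a b) (fun _ => (1:ℝ)) := funext (eD_eq_of_le h)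
    rw [this]
    exact (integrable_indicator_iff measurableSet_Ico).2
      (integrableOn_const measure_Ico_lt_top.ne)
  · rw [eD_comm]
    have : eD b a = Set.indicator (Set.Ico b a) (fun _ => (1:ℝ)) := funext (eD_eq_of_le h)
    rw [this]
    exact (integrable_indicator_iff measurableSet_Ico).2
      (integrableOn_const measure_Ico_lt_top.ne)

lemma eD_integral_abs (a b : ℝ) : ∫ t, eD a b t = |a - b| := by
  rcases le_total a b with h | h
  · rw [eD_integral h, abs_of_nonpos (by linarith)]; ring
  · rw [eD_comm, eD_integral h, abs_of_nonneg (by linarith)]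

lemma sum_sq_expand {n m : ℕ} (w : Fin n → ℝ) (v : Fin m → ℝ) (f : Fin n → ℝ) (g : Fin m → ℝ)
    (hw : ∑ i, w i = 1) (hv : ∑ j, v j = 1) :
    ∑ i, ∑ j, w i * v j * (f i - g j)^2
      = ∑ i, w i * (f i)^2 + ∑ j, v j * (g j)^2
        - 2 * ((∑ i, w i * f i) * (∑ j, v j * g j)) := by
  have h1 : ∑ i, ∑ j, w i * v j * (f i - g j)^2
      = ∑ i, ∑ j, (w i * (f i)^2 * v j + w i * (v j * (g j)^2)
          - 2 * ((w i * f i) * (v j * g j))) := by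
    refine Finset.sum_congr rfl fun i _ => Finset.sum_congr rfl fun j _ => by ring
  rw [h1]
  simp only [Finset.sum_sub_distrib, Finset.sum_add_distrib, ← Finset.mul_sum,
    ← Finset.sum_mul, hw, hv]
  ring

/-- Nonnegativity of the weighted V-statistic energy distance (α = 1, Euclidean distance on ℝ):
for nonnegative weights summing to 1 on each sample and arbitrary real points,
2Σ w⁰ᵢw¹ⱼ|x⁰ᵢ−x¹ⱼ| − Σ w⁰ᵢw⁰ⱼ|x⁰ᵢ−x⁰ⱼ| − Σ w¹ᵢw¹ⱼ|x¹ᵢ−x¹ⱼ| ≥ 0. -/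
theorem weighted_vstatistic_energy_nonneg
    {n₀ n₁ : ℕ} (w0 : Fin n₀ → ℝ) (w1 : Fin n₁ → ℝ) (x0 : Fin n₀ → ℝ) (x1 : Fin n₁ → ℝ)
    (hw0 : ∀ i, 0 ≤ w0 i) (hw1 : ∀ j, 0 ≤ w1 j)
    (hs0 : ∑ i, w0 i = 1) (hs1 : ∑ j, w1 j = 1) :
    0 ≤ 2 * (∑ i, ∑ j, w0 i * w1 j * |x0 i - x1 j|)
        - (∑ i, ∑ j, w0 i * w0 j * |x0 i - x0 j|)
        - (∑ i, ∑ j, w1 i * w1 j * |x1 i - x1 j|) := by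
  set S01 : ℝ → ℝ := fun t => ∑ i, ∑ j, w0 i * w1 j * eD (x0 i) (x1 j) t with hS01
  set S00 : ℝ → ℝ := fun t => ∑ i, ∑ j, w0 i * w0 j * eD (x0 i) (x0 j) t with hS00
  set S11 : ℝ → ℝ := fun t => ∑ i, ∑ j, w1 i * w1 j * eD (x1 i) (x1 j) t with hS11
  have int01 : Integrable S01 :=
    integrable_finset_sum _ fun i _ =>
      integrable_finset_sum _ fun j _ => (eD_integrable _ _).const_mul _
  have int00 : Integrable S00 :=
    integrable_finset_sum _ fun i _ =>
      integrable_finset_sum _ fun j _ => (eD_integrable _ _).const_mul _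
  have int11 : Integrable S11 :=
    integrable_finset_sum _ fun i _ =>
      integrable_finset_sum _ fun j _ => (eD_integrable _ _).const_mul _
  have i01 : ∫ t, S01 t = ∑ i, ∑ j, w0 i * w1 j * |x0 i - x1 j| := by
    rw [hS01, integral_finset_sum _ fun i _ =>
      integrable_finset_sum _ fun j _ => (eD_integrable _ _).const_mul _]
    refine Finset.sum_congr rfl fun i _ => ?_
    rw [integral_finset_sum _ fun j _ => (eD_integrable _ _).const_mul _]
    exact Finset.sum_congr rfl fun j _ => by
      rw [integral_const_mul, eD_integral_abs]
  have i00 : ∫ t, S00 t = ∑ i, ∑ j, w0 i * w0 j * |x0 i - x0 j| := by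
    rw [hS00, integral_finset_sum _ fun i _ =>
      integrable_finset_sum _ fun j _ => (eD_integrable _ _).const_mul _]
    refine Finset.sum_congr rfl fun i _ => ?_
    rw [integral_finset_sum _ fun j _ => (eD_integrable _ _).const_mul _]
    exact Finset.sum_congr rfl fun j _ => by
      rw [integral_const_mul, eD_integral_abs]
  have i11 : ∫ t, S11 t = ∑ i, ∑ j, w1 i * w1 j * |x1 i - x1 j| := by
    rw [hS11, integral_finset_sum _ fun i _ =>
      integrable_finset_sum _ fun j _ => (eD_integrable _ _).const_mul _]
    refine Finset.sum_congr rfl fun i _ => ?_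
    rw [integral_finset_sum _ fun j _ => (eD_integrable _ _).const_mul _]
    exact Finset.sum_congr rfl fun j _ => by
      rw [integral_const_mul, eD_integral_abs]
  have hpt : ∀ t, 0 ≤ 2 * S01 t - S00 t - S11 t := by
    intro t
    have h01 := sum_sq_expand w0 w1 (fun i => eJ (x0 i) t) (fun j => eJ (x1 j) t) hs0 hs1
    have h00 := sum_sq_expand w0 w0 (fun i => eJ (x0 i) t) (fun j => eJ (x0 j) t) hs0 hs0
    have h11 := sum_sq_expand w1 w1 (fun i => eJ (x1 i) t) (fun j => eJ (x1 j) t) hs1 hs1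
    simp only [hS01, hS00, hS11, eD]
    rw [h01, h00, h11]
    nlinarith [sq_nonneg ((∑ i, w0 i * eJ (x0 i) t) - (∑ j, w1 j * eJ (x1 j) t))]
  have key : 0 ≤ ∫ t, (2 * S01 t - S00 t - S11 t) :=
    integral_nonneg hpt
  have e1 : ∫ t, (2 * S01 t - S00 t - S11 t)
      = (∫ t, (2 * S01 t - S00 t)) - ∫ t, S11 t :=
    integral_sub ((int01.const_mul 2).sub int00) int11
  have e2 : ∫ t, (2 * S01 t - S00 t) = (∫ t, 2 * S01 t) - ∫ t, S00 t :=
    integral_sub (int01.const_mul 2) int00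
  have e3 : ∫ t, 2 * S01 t = 2 * ∫ t, S01 t := integral_const_mul 2 S01
  rw [e1, e2, e3, i01, i00, i11] at key
  exact key
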